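/- Let q ≥ 7 be a prime power, F the finite field with q elements, and K a field extension of F with q² elements. Then there exist four elements β₁, β₂, β₃, β₄ ∈ K∖F, pairwise distinct and pairwise non-conjugate (β_j ≠ β_i^q for all i ≠ j), such that β₁^{q+1} = β₂^{q+1} = β₃^{q+1} = β₄^{q+1} is a nonzero element of F. Consequently, the four vectors (1, β_i^q + β_i, (β_i^q + β_i)², β_i^{q+1}, β_i^{2(q+1)}) ∈ F⁵, i = 1, 2, 3, 4, are linearly dependent over F. -/

import Mathlib

open Polynomial

lemma small_not_dvd {q : ℕ} (h7 : 7 ≤ q) {r : ℤ} (h0 : r ≠ 0) (hr : |r| ≤ 7) :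
    ¬ ((q : ℤ) + 1) ∣ r := by
  intro hd
  have h1 : ((q : ℤ) + 1) ∣ |r| := (dvd_abs _ _).2 hd
  have h2 : ((q : ℤ) + 1) ≤ |r| := Int.le_of_dvd (abs_pos.2 h0) h1
  have : (8 : ℤ) ≤ (q : ℤ) + 1 := by exact_mod_cast Nat.succ_le_succ h7
  omega

lemma range_algebraMap_eq {q : ℕ} (hq7 : 7 ≤ q)
    (F K : Type*) [Field F] [Fintype F] [Field K] [Fintype K] [Algebra F K]
    (hF : Fintype.card F = q) :
    Set.range (algebraMap F K) = {x : K | x ^ q = x} := by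
  classical
  have hinj : Function.Injective (algebraMap F K) := (algebraMap F K).injective
  set p : K[X] := X ^ q - X with hp
  have hdeg : p.natDegree = q := by
    rw [hp, natDegree_sub_eq_left_of_natDegree_lt] <;>
      simp [natDegree_X_pow] <;> omega
  have hpne : p ≠ 0 := fun h => by simp [h] at hdeg; omega
  set T : Finset K := Finset.univ.filter (fun x : K => x ^ q = x) with hT
  set R : Finset K := Finset.univ.image (algebraMap F K) with hR
  have hRT : R ⊆ T := by
    intro x hx
    rw [hR] at hx
    obtain ⟨a, _, rfl⟩ := Finset.mem_image.1 hx
    have : a ^ q = a := by rw [← hF]; exact FiniteField.pow_card a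
    simp [hT, ← map_pow, this]
  have hTcard : T.card ≤ q := by
    have hsub : T ⊆ p.roots.toFinset := by
      intro x hx
      simp only [hT, Finset.mem_filter] at hx
      simp only [Multiset.mem_toFinset, mem_roots hpne, IsRoot.def, hp]
      simp [hx.2, sub_eq_zero]
      exact fun h => hpne (by rw [hp, h, sub_self])
    calc T.card ≤ p.roots.toFinset.card := Finset.card_le_card hsub
      _ ≤ Multiset.card p.roots := Multiset.toFinset_card_le _
      _ ≤ p.natDegree := card_roots' p
      _ = q := hdeg
  have hRcard : R.card = q := by
    rw [hR, Finset.card_image_of_injective _ hinj, Finset.card_univ, hF]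
  have hEq : R = T := Finset.eq_of_subset_of_card_le hRT (by omega)
  ext x
  constructor
  · rintro ⟨a, rfl⟩
    have : a ^ q = a := by rw [← hF]; exact FiniteField.pow_card a
    simp [Set.mem_setOf_eq, ← map_pow, this]
  · intro hx
    have : x ∈ T := by
      simp only [hT, Finset.mem_filter, Finset.mem_univ, true_and]; exact hx
    rw [← hEq, hR] at this
    obtain ⟨a, _, rfl⟩ := Finset.mem_image.1 this
    exact ⟨a, rfl⟩

theorem statement9 {q : ℕ} (hq : ∃ p e : ℕ, p.Prime ∧ 0 < e ∧ q = p ^ e) (hq7 : 7 ≤ q)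
    (F K : Type*) [Field F] [Fintype F] [Field K] [Fintype K] [Algebra F K]
    (hF : Fintype.card F = q) (hK : Fintype.card K = q ^ 2) :
    ∃ β : Fin 4 → K,
      (∀ i, β i ∉ Set.range (algebraMap F K)) ∧
      (∀ i j, i ≠ j → β i ≠ β j) ∧
      (∀ i j, i ≠ j → β j ≠ β i ^ q) ∧
      (∃ γ : F, γ ≠ 0 ∧ ∀ i, β i ^ (q + 1) = algebraMap F K γ) ∧
      ¬ LinearIndependent F
        (fun i => (![1, β i ^ q + β i, (β i ^ q + β i) ^ 2, β i ^ (q + 1),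
          β i ^ (2 * (q + 1))] : Fin 5 → K)) := by
  classical
  obtain ⟨pp, ee, hpp, hee, hqpe⟩ := hq
  have hq1 : 1 ≤ q := by omega
  have hq2 : 1 ≤ q ^ 2 := by nlinarith
  have hqz : (7 : ℤ) ≤ (q : ℤ) := by exact_mod_cast hq7
  have hrange : Set.range (algebraMap F K) = {x : K | x ^ q = x} :=
    range_algebraMap_eq hq7 F K hF
  -- characteristic of K
  have hcharK : CharP K pp := by
    have hrc : (ringChar K).Prime := CharP.char_is_prime K (ringChar K)
    obtain ⟨n, hn⟩ := FiniteField.card K (ringChar K)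
    have hcard : pp ^ (ee * 2) = (ringChar K) ^ (n : ℕ) := by
      calc pp ^ (ee * 2) = (pp ^ ee) ^ 2 := by rw [pow_mul]
        _ = Fintype.card K := by rw [hK, hqpe]
        _ = (ringChar K) ^ (n : ℕ) := hn.2
    have hdvd : pp ∣ (ringChar K) ^ (n : ℕ) := by
      rw [← hcard]; exact dvd_pow_self pp (by omega)
    have : pp = ringChar K :=
      ((Nat.prime_dvd_prime_iff_eq hpp hrc).1 (hpp.dvd_of_dvd_pow hdvd))
    rw [this]; exact ringChar.charP K
  haveI : Fact pp.Prime := ⟨hpp⟩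
  have hfrob : ∀ x y : K, (x + y) ^ q = x ^ q + y ^ q := by
    intro x y; rw [hqpe]; exact add_pow_char_pow x y pp ee
  have hKpow : ∀ x : K, x ^ (q ^ 2) = x := fun x => by
    rw [← hK]; exact FiniteField.pow_card x
  -- cyclic group of units
  have hcardU : Fintype.card Kˣ = q ^ 2 - 1 := by rw [Fintype.card_units, hK]
  obtain ⟨g, hg⟩ := IsCyclic.exists_generator (α := Kˣ)
  have hord : orderOf g = q ^ 2 - 1 := by
    rw [orderOf_eq_card_of_forall_mem_zpowers hg, Nat.card_eq_fintype_card, hcardU]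
  have hg1 : g ^ (q ^ 2 - 1) = 1 := by rw [← hord]; exact pow_orderOf_eq_one g
  have hcast : ((q ^ 2 - 1 : ℕ) : ℤ) = ((q : ℤ) - 1) * ((q : ℤ) + 1) := by
    rw [Nat.cast_sub hq2]; push_cast; ring
  have hgpow : ∀ m n : ℕ, g ^ m = g ^ n ↔
      (((q : ℤ) - 1) * ((q : ℤ) + 1)) ∣ ((n : ℤ) - (m : ℤ)) := by
    intro m n
    rw [pow_eq_pow_iff_modEq, hord, Nat.modEq_iff_dvd, hcast]
  have hdvdred : ∀ t : ℤ, ((((q : ℤ) - 1) * ((q : ℤ) + 1)) ∣ ((q : ℤ) - 1) * t)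
      ↔ ((q : ℤ) + 1) ∣ t := fun t => mul_dvd_mul_iff_left (by omega)
  -- the four elements
  set a : Fin 4 → ℕ := ![0, 2, 3, 4] with ha
  set e : Fin 4 → ℕ := fun i => 1 + a i * (q - 1) with hedef
  set β : Fin 4 → K := fun i => ((g ^ (e i) : Kˣ) : K) with hβ
  have hsub : ((q - 1 : ℕ) : ℤ) = (q : ℤ) - 1 := by omega
  have he : ∀ i, (e i : ℤ) = 1 + (a i : ℤ) * ((q : ℤ) - 1) := by
    intro i; simp only [hedef]; push_cast [hsub]; ring
  have h9 : (q - 1) * (q + 1) = q ^ 2 - 1 := by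
    zify [hq1, hq2]; ring
  -- key non-divisibility facts
  have key1 : ∀ i : Fin 4, ¬ ((q : ℤ) + 1) ∣ (1 - 2 * (a i : ℤ)) := by
    intro i hd
    fin_cases i <;> norm_num [ha] at hd <;>
      exact small_not_dvd hq7 (by norm_num) (by norm_num) hd
  have key2 : ∀ i j : Fin 4, i ≠ j → ¬ ((q : ℤ) + 1) ∣ ((a j : ℤ) - (a i : ℤ)) := by
    intro i j hij hd
    fin_cases i <;> fin_cases j <;>
      first
        | exact absurd rfl hij
        | (norm_num [ha] at hd;
           exact small_not_dvd hq7 (by norm_num) (by norm_num) hd)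
  have key3 : ∀ i j : Fin 4, i ≠ j → ¬ ((q : ℤ) + 1) ∣ (1 - (a i : ℤ) - (a j : ℤ)) := by
    intro i j hij hd
    fin_cases i <;> fin_cases j <;>
      first
        | exact absurd rfl hij
        | (norm_num [ha] at hd;
           exact small_not_dvd hq7 (by norm_num) (by norm_num) hd)
  -- common norm value
  set c : K := ((g ^ (q + 1) : Kˣ) : K) with hc
  have hnorm : ∀ i : Fin 4, β i ^ (q + 1) = c := by
    intro i
    have hnat : e i * (q + 1) = (q + 1) + (q ^ 2 - 1) * a i := by
      simp only [hedef]
      calc (1 + a i * (q - 1)) * (q + 1)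
          = (q + 1) + ((q - 1) * (q + 1)) * a i := by ring
        _ = (q + 1) + (q ^ 2 - 1) * a i := by rw [h9]
    calc β i ^ (q + 1) = ((g ^ (e i * (q + 1)) : Kˣ) : K) := by
          simp [hβ, pow_mul]
      _ = (((g ^ (q + 1)) * (g ^ (q ^ 2 - 1)) ^ (a i) : Kˣ) : K) := by
          rw [hnat, pow_add, pow_mul]
      _ = c := by rw [hg1, hc]; simp
  have hcq : c ^ q = c := by
    have h1 : c ^ (q - 1) = 1 := by
      rw [hc, ← Units.val_pow_eq_pow_val, ← pow_mul]
      have : (q + 1) * (q - 1) = q ^ 2 - 1 := by rw [mul_comm]; exact h9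
      rw [this, hg1, Units.val_one]
    calc c ^ q = c ^ (1 + (q - 1)) := by congr 1; omega
      _ = c * c ^ (q - 1) := by rw [pow_add, pow_one]
      _ = c := by rw [h1, mul_one]
  have hcmem : c ∈ Set.range (algebraMap F K) := by rw [hrange]; exact hcq
  obtain ⟨γ, hγ⟩ := hcmem
  have hγ0 : γ ≠ 0 := by
    intro h0
    rw [h0, map_zero] at hγ
    exact (Units.ne_zero (g ^ (q + 1))) hγ.symm
  -- traces are in F
  have hsF : ∀ i : Fin 4, ∃ s : F, algebraMap F K s = β i ^ q + β i := by
    intro i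
    have hmem : (β i ^ q + β i) ∈ Set.range (algebraMap F K) := by
      rw [hrange, Set.mem_setOf_eq, hfrob]
      have h2 : (β i ^ q) ^ q = β i := by
        rw [← pow_mul, ← pow_two]
        exact hKpow (β i)
      rw [h2, add_comm]
    exact hmem
  choose s hs using hsF
  refine ⟨β, ?_, ?_, ?_, ⟨γ, hγ0, fun i => by rw [hnorm i, ← hγ]⟩, ?_⟩
  · -- not in F
    intro i hmem
    rw [hrange, Set.mem_setOf_eq] at hmem
    have hu : g ^ (e i * q) = g ^ (e i) := by
      apply Units.ext
      push_cast [pow_mul]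
      simpa [hβ] using hmem
    have hd := (hgpow _ _).1 hu
    have heq : ((e i : ℤ) - ((e i * q : ℕ) : ℤ)) =
        ((q : ℤ) - 1) * (-(1 + (a i : ℤ) * ((q : ℤ) - 1))) := by
      push_cast [he i]; ring
    rw [heq, hdvdred] at hd
    have hd2 : ((q : ℤ) + 1) ∣ ((a i : ℤ) * ((q : ℤ) + 1) + (1 - 2 * (a i : ℤ))) := by
      have h3 : ((a i : ℤ) * ((q : ℤ) + 1) + (1 - 2 * (a i : ℤ)))
          = -(-(1 + (a i : ℤ) * ((q : ℤ) - 1))) := by ring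
      rw [h3]; exact (dvd_neg).2 hd
    rw [dvd_add_right (dvd_mul_left _ _)] at hd2
    exact key1 i hd2
  · -- distinct
    intro i j hij hbe
    have hu : g ^ (e i) = g ^ (e j) := Units.ext (by simpa [hβ] using hbe)
    have hd := (hgpow _ _).1 hu
    have heq : ((e j : ℤ) - (e i : ℤ)) = ((q : ℤ) - 1) * ((a j : ℤ) - (a i : ℤ)) := by
      rw [he i, he j]; ring
    rw [heq, hdvdred] at hd
    exact key2 i j hij hd
  · -- non-conjugate
    intro i j hij hbe
    have hu : g ^ (e j) = g ^ (e i * q) := by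
      apply Units.ext
      push_cast [pow_mul]
      simpa [hβ] using hbe
    have hd := (hgpow _ _).1 hu
    have heq : (((e i * q : ℕ) : ℤ) - (e j : ℤ)) =
        ((q : ℤ) - 1) * (1 + (a i : ℤ) * (q : ℤ) - (a j : ℤ)) := by
      push_cast [he i, he j]; ring
    rw [heq, hdvdred] at hd
    have hd2 : ((q : ℤ) + 1) ∣ ((a i : ℤ) * ((q : ℤ) + 1) + (1 - (a i : ℤ) - (a j : ℤ))) := by
      have h3 : ((a i : ℤ) * ((q : ℤ) + 1) + (1 - (a i : ℤ) - (a j : ℤ)))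
          = 1 + (a i : ℤ) * (q : ℤ) - (a j : ℤ) := by ring
      rw [h3]; exact hd
    rw [dvd_add_right (dvd_mul_left _ _)] at hd2
    exact key3 i j hij hd2
  · -- linear dependence
    have hnli : ¬ LinearIndependent F (fun i : Fin 4 => (![1, s i, (s i) ^ 2] : Fin 3 → F)) := by
      intro h
      have hle := h.fintype_card_le_finrank
      rw [Module.finrank_pi] at hle
      simp [Fintype.card_fin] at hle
    obtain ⟨cf, hcf, i0, hi0⟩ := Fintype.not_linearIndependent_iff.mp hnli
    have h0 : ∑ i : Fin 4, cf i = 0 := by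
      have := congrFun hcf 0
      simpa [Finset.sum_apply] using this
    have h1 : ∑ i : Fin 4, cf i * s i = 0 := by
      have := congrFun hcf 1
      simpa [Finset.sum_apply] using this
    have h2 : ∑ i : Fin 4, cf i * (s i) ^ 2 = 0 := by
      have := congrFun hcf 2
      simpa [Finset.sum_apply] using this
    have hsum : ∀ x : Fin 4 → F, (∑ i : Fin 4, cf i * x i = 0) →
        ∑ i : Fin 4, cf i • (algebraMap F K (x i)) = 0 := by
      intro x hx
      have hh : ∑ i : Fin 4, cf i • (algebraMap F K (x i))
          = algebraMap F K (∑ i : Fin 4, cf i * x i) := by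
        rw [map_sum]
        exact Finset.sum_congr rfl fun i _ => by rw [Algebra.smul_def, map_mul]
      rw [hh, hx, map_zero]
    refine Fintype.not_linearIndependent_iff.mpr ⟨cf, ?_, i0, hi0⟩
    funext k
    rw [Finset.sum_apply]
    fin_cases k
    · -- component 0
      have := hsum (fun _ => 1) (by simpa using h0)
      simpa using this
    · -- component 1
      have := hsum s h1
      calc (∑ i : Fin 4, (cf i • (![1, β i ^ q + β i, (β i ^ q + β i) ^ 2, β i ^ (q + 1),
              β i ^ (2 * (q + 1))] : Fin 5 → K)) 1)
          = ∑ i : Fin 4, cf i • (algebraMap F K (s i)) := by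
            refine Finset.sum_congr rfl fun i _ => ?_
            simp [hs i]
        _ = 0 := this
    · -- component 2
      have := hsum (fun i => (s i) ^ 2) h2
      calc (∑ i : Fin 4, (cf i • (![1, β i ^ q + β i, (β i ^ q + β i) ^ 2, β i ^ (q + 1),
              β i ^ (2 * (q + 1))] : Fin 5 → K)) 2)
          = ∑ i : Fin 4, cf i • (algebraMap F K ((s i) ^ 2)) := by
            refine Finset.sum_congr rfl fun i _ => ?_
            simp [map_pow, hs i]
        _ = 0 := this
    · -- component 3
      have := hsum (fun _ => γ) (by rw [← Finset.sum_mul, h0, zero_mul])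
      calc (∑ i : Fin 4, (cf i • (![1, β i ^ q + β i, (β i ^ q + β i) ^ 2, β i ^ (q + 1),
              β i ^ (2 * (q + 1))] : Fin 5 → K)) 3)
          = ∑ i : Fin 4, cf i • (algebraMap F K γ) := by
            refine Finset.sum_congr rfl fun i _ => ?_
            simp [hnorm i, hγ]
        _ = 0 := this
    · -- component 4
      have := hsum (fun _ => γ ^ 2) (by rw [← Finset.sum_mul, h0, zero_mul])
      have hpow2 : ∀ i : Fin 4, β i ^ (2 * (q + 1)) = algebraMap F K (γ ^ 2) := by
        intro i
        rw [mul_comm, pow_mul, hnorm i, ← hγ, map_pow]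
      calc (∑ i : Fin 4, (cf i • (![1, β i ^ q + β i, (β i ^ q + β i) ^ 2, β i ^ (q + 1),
              β i ^ (2 * (q + 1))] : Fin 5 → K)) 4)
          = ∑ i : Fin 4, cf i • (algebraMap F K (γ ^ 2)) := by
            refine Finset.sum_congr rfl fun i _ => ?_
            simp [hpow2 i]
        _ = 0 := this
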